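/- Let A ⊆ B be an integral extension of commutative rings. Then the extension A ⊆ A^{R+}_B is R-subintegral, where A^{R+}_B is the R-seminormalization of A in B. -/

import Mathlib

/-- An ideal `I` of a commutative ring is *real* if whenever a finite sum of squares
of elements lies in `I`, then each of these elements lies in `I`. -/
def Ideal.IsRealIdeal {A : Type*} [CommRing A] (I : Ideal A) : Prop :=
  ∀ (n : ℕ) (a : Fin n → A), (∑ i, a i ^ 2) ∈ I → ∀ i, a i ∈ I

/-- An integral extension `φ : A → B` is *R-subintegral* if for every real prime ideal `p`
of `A` there is exactly one prime ideal `q` of `B` lying over `p`, this `q` is a real ideal,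
and the induced map of residue fields `κ(p) → κ(q)` is an isomorphism.  (The residue-field
isomorphism is expressed by its surjectivity: every `b : B` is congruent mod `q` to a
fraction `a/s` with `a s : A`, `s ∉ p`; injectivity is automatic for fields.) -/
def RSubintegral {A B : Type*} [CommRing A] [CommRing B] (φ : A →+* B) : Prop :=
  ∀ p : Ideal A, p.IsPrime → p.IsRealIdeal →
    (∃! q : Ideal B, q.IsPrime ∧ q.comap φ = p) ∧
    ∀ q : Ideal B, q.IsPrime → q.comap φ = p →
      q.IsRealIdeal ∧ ∀ b : B, ∃ a s : A, s ∉ p ∧ φ s * b - φ a ∈ q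

/-- The sum `S + I` of a subring and an ideal, as a subring. -/
def Subring.addIdeal {R : Type*} [CommRing R] (S : Subring R) (I : Ideal R) : Subring R where
  carrier := {x | ∃ s ∈ S, ∃ r ∈ I, x = s + r}
  zero_mem' := ⟨0, S.zero_mem, 0, I.zero_mem, by ring⟩
  one_mem' := ⟨1, S.one_mem, 0, I.zero_mem, by ring⟩
  add_mem' := by
    rintro x y ⟨s, hs, r, hr, rfl⟩ ⟨s', hs', r', hr', rfl⟩
    exact ⟨s + s', S.add_mem hs hs', r + r', I.add_mem hr hr', by ring⟩
  neg_mem' := by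
    rintro x ⟨s, hs, r, hr, rfl⟩
    exact ⟨-s, S.neg_mem hs, -r, I.neg_mem hr, by ring⟩
  mul_mem' := by
    rintro x y ⟨s, hs, r, hr, rfl⟩ ⟨s', hs', r', hr', rfl⟩
    exact ⟨s * s', S.mul_mem hs hs',
      s * r' + r * s' + r * r',
      I.add_mem (I.add_mem (I.mul_mem_left _ hr') (I.mul_mem_right _ hr)) (I.mul_mem_left _ hr'),
      by ring⟩

variable {A B : Type*} [CommRing A] [CommRing B]

/-- The canonical map `A_p → B_p`, where `B_p` denotes the localization of `B` at the
multiplicative set `φ(A ∖ p)`. -/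
noncomputable def locMap (φ : A →+* B) (p : Ideal A) [p.IsPrime] :
    Localization.AtPrime p →+* Localization (p.primeCompl.map φ) :=
  IsLocalization.map _ φ (Submonoid.le_comap_map p.primeCompl)

/-- The subring `A_p + Rad(B_p)` of `B_p`, where `A_p` is the image of the localization of
`A` at `p` and `Rad` is the Jacobson radical. -/
noncomputable def localCondSubring (φ : A →+* B) (p : Ideal A) [p.IsPrime] :
    Subring (Localization (p.primeCompl.map φ)) :=
  (locMap φ p).range.addIdeal ((⊥ : Ideal (Localization (p.primeCompl.map φ))).jacobson)

/-- The R-seminormalization `A^{R+}_B` of `A` in `B`: the elements `b : B` such that for every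
real prime ideal `p` of `A`, the image of `b` in `B_p` lies in `A_p + Rad(B_p)`. -/
noncomputable def RSemi (φ : A →+* B) : Subring B :=
  ⨅ p : {p : Ideal A // p.IsPrime ∧ p.IsRealIdeal},
    letI : p.1.IsPrime := p.2.1
    Subring.comap (algebraMap B (Localization (p.1.primeCompl.map φ))) (localCondSubring φ p.1)

lemma mem_RSemi_of_range (φ : A →+* B) (a : A) : φ a ∈ RSemi φ := by
  rw [RSemi, Subring.mem_iInf]
  intro p
  letI : p.1.IsPrime := p.2.1
  rw [Subring.mem_comap]
  refine ⟨locMap φ p.1 (algebraMap A (Localization.AtPrime p.1) a), ⟨_, rfl⟩,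
    0, Ideal.zero_mem _, ?_⟩
  rw [add_zero, locMap, IsLocalization.map_eq]

/-- Decomposition of an element of the R-seminormalization in `B_p`. -/
lemma RSemi_decomp (φ : A →+* B) (p : Ideal A) [hp : p.IsPrime] (hre : p.IsRealIdeal)
    (x : RSemi φ) :
    ∃ (a : A) (s : p.primeCompl) (j : Localization (p.primeCompl.map φ)),
      j ∈ (⊥ : Ideal (Localization (p.primeCompl.map φ))).jacobson ∧
      algebraMap B (Localization (p.primeCompl.map φ)) (x : B) =
        locMap φ p (IsLocalization.mk' (Localization.AtPrime p) a s) + j := by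
  have h2 := Subring.mem_comap.mp ((Subring.mem_iInf.mp x.2) ⟨p, hp, hre⟩)
  obtain ⟨y, hy, r, hr, hxe⟩ :
      ∃ y ∈ (locMap φ p).range, ∃ r ∈ (⊥ : Ideal (Localization (p.primeCompl.map φ))).jacobson,
        algebraMap B (Localization (p.primeCompl.map φ)) (x : B) = y + r := h2
  obtain ⟨z, rfl⟩ := hy
  obtain ⟨⟨a, s⟩, rfl⟩ := IsLocalization.mk'_surjective p.primeCompl z
  exact ⟨a, s, r, hr, hxe⟩

/-- Characterization of membership in a prime of `RSemi φ` lying over a prime `p` of `A`,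
in terms of a decomposition of the image in `B_p`. -/
lemma key_char (φ : A →+* B) (hinj : Function.Injective φ) (hint : φ.IsIntegral)
    (p : Ideal A) [hp : p.IsPrime]
    (q : Ideal (RSemi φ)) (hq : q.IsPrime)
    (hcom : q.comap (φ.codRestrict (RSemi φ) (mem_RSemi_of_range φ)) = p)
    (x : RSemi φ) (a : A) (s : p.primeCompl) (j : Localization (p.primeCompl.map φ))
    (hj : j ∈ (⊥ : Ideal (Localization (p.primeCompl.map φ))).jacobson)
    (hd : algebraMap B (Localization (p.primeCompl.map φ)) (x : B) =
      locMap φ p (IsLocalization.mk' (Localization.AtPrime p) a s) + j) :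
    x ∈ q ↔ a ∈ p := by
  set ψ := φ.codRestrict (RSemi φ) (mem_RSemi_of_range φ) with hψ
  letI : Algebra (RSemi φ) B := (RSemi φ).subtype.toAlgebra
  haveI : Algebra.IsIntegral (RSemi φ) B := by
    refine ⟨fun b => ?_⟩
    obtain ⟨P, hm, he⟩ := hint b
    refine ⟨P.map ψ, hm.map _, ?_⟩
    have hcompeq : ((algebraMap (RSemi φ) B).comp ψ) = φ := rfl
    rw [Polynomial.eval₂_map, hcompeq]
    exact he
  haveI : q.IsPrime := hq
  obtain ⟨Q, -, hQp, hQc⟩ := Ideal.exists_ideal_over_prime_of_isIntegral (S := B) q ⊥ (by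
    rw [← RingHom.ker_eq_comap_bot]
    have hker : RingHom.ker (algebraMap (RSemi φ) B) = ⊥ :=
      (RingHom.injective_iff_ker_eq_bot _).mp Subtype.val_injective
    rw [hker]; exact bot_le)
  haveI : Q.IsPrime := hQp
  have hQcomapφ : Q.comap φ = p := by
    rw [← hcom, ← hQc, Ideal.comap_comap]
    rfl
  have hdisj : Disjoint ((p.primeCompl.map φ : Submonoid B) : Set B) (Q : Set B) := by
    rw [Set.disjoint_left]
    rintro _ ⟨s', hs', rfl⟩ hmem
    exact hs' (by rw [← hQcomapφ]; exact hmem)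
  set QP := Q.map (algebraMap B (Localization (p.primeCompl.map φ))) with hQP
  have hQPprime : QP.IsPrime :=
    IsLocalization.isPrime_of_isPrime_disjoint (p.primeCompl.map φ) (Localization (p.primeCompl.map φ)) Q hQp hdisj
  haveI : QP.IsPrime := hQPprime
  have hQPc : QP.comap (algebraMap B (Localization (p.primeCompl.map φ))) = Q :=
    IsLocalization.comap_map_of_isPrime_disjoint (p.primeCompl.map φ) (Localization (p.primeCompl.map φ)) hQp hdisj
  have hintloc : (locMap φ p).IsIntegral := isIntegral_localization' hint p.primeCompl
  have hP'c : (QP.comap (locMap φ p)).comap (algebraMap A (Localization.AtPrime p)) = p := by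
    rw [Ideal.comap_comap, locMap, IsLocalization.map_comp, ← Ideal.comap_comap, hQPc, hQcomapφ]
  have hP'max : (QP.comap (locMap φ p)).IsMaximal := by
    have h1 : p.map (algebraMap A (Localization.AtPrime p)) ≤ QP.comap (locMap φ p) :=
      Ideal.map_le_iff_le_comap.2 hP'c.ge
    rw [Localization.AtPrime.map_eq_maximalIdeal] at h1
    have hne : QP.comap (locMap φ p) ≠ ⊤ := fun ht => hp.ne_top (by
      rw [← hP'c, ht, Ideal.comap_top])
    exact ((IsLocalRing.maximalIdeal.isMaximal _).eq_of_le hne h1) ▸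
      IsLocalRing.maximalIdeal.isMaximal _
  have hQPmax : QP.IsMaximal :=
    Ideal.isMaximal_of_isIntegral_of_isMaximal_comap' (locMap φ p) hintloc QP hP'max
  have hJ : (⊥ : Ideal (Localization (p.primeCompl.map φ))).jacobson ≤ QP := sInf_le ⟨bot_le, hQPmax⟩
  have hjQP : j ∈ QP := hJ hj
  have hspec : locMap φ p (IsLocalization.mk' (Localization.AtPrime p) a s) *
      algebraMap B (Localization (p.primeCompl.map φ)) (φ s) = algebraMap B (Localization (p.primeCompl.map φ)) (φ a) := by
    rw [locMap, IsLocalization.map_mk']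
    exact IsLocalization.mk'_spec (Localization (p.primeCompl.map φ)) (φ a) ⟨φ s, Submonoid.mem_map_of_mem _ s.2⟩
  have hxq : x ∈ q ↔ algebraMap B (Localization (p.primeCompl.map φ)) (x : B) ∈ QP := by
    rw [← hQc, ← hQPc, Ideal.mem_comap, Ideal.mem_comap]
    rfl
  rw [hxq, hd]
  constructor
  · intro hsum
    have h1 : locMap φ p (IsLocalization.mk' (Localization.AtPrime p) a s) ∈ QP := by
      have := QP.sub_mem hsum hjQP
      simpa using this
    have h2 : algebraMap B (Localization (p.primeCompl.map φ)) (φ a) ∈ QP := hspec ▸ QP.mul_mem_right _ h1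
    have h3 : φ a ∈ Q := by rw [← hQPc]; exact h2
    rw [← hQcomapφ]; exact h3
  · intro hap
    have h3 : φ a ∈ Q := by rw [← hQcomapφ] at hap; exact hap
    have h2 : algebraMap B (Localization (p.primeCompl.map φ)) (φ a) ∈ QP := Ideal.mem_map_of_mem _ h3
    have h2' : locMap φ p (IsLocalization.mk' (Localization.AtPrime p) a s) *
        algebraMap B (Localization (p.primeCompl.map φ)) (φ s) ∈ QP := by
      rw [hspec]; exact h2
    rcases hQPprime.mem_or_mem h2' with h1 | h1
    · exact QP.add_mem h1 hjQP
    · exfalso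
      have : φ (s : A) ∈ Q := by rw [← hQPc]; exact h1
      have h4 : (s : A) ∈ Q.comap φ := Ideal.mem_comap.mpr this
      rw [hQcomapφ] at h4
      exact s.2 h4

/-- For an integral extension `A ⊆ B`, the extension `A ⊆ A^{R+}_B` of `A` in its
R-seminormalization in `B` is R-subintegral. -/
theorem rSubintegral_rSemi (φ : A →+* B) (hinj : Function.Injective φ)
    (hint : φ.IsIntegral) :
    RSubintegral (φ.codRestrict (RSemi φ) (mem_RSemi_of_range φ)) := by
  intro p hp hreal
  letI : p.IsPrime := hp
  set ψ := φ.codRestrict (RSemi φ) (mem_RSemi_of_range φ) with hψ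
  haveI hnt : Nontrivial (Localization (p.primeCompl.map φ)) := by
    refine ⟨1, 0, fun h01 => ?_⟩
    have h1 : algebraMap B (Localization (p.primeCompl.map φ)) 1
        = algebraMap B (Localization (p.primeCompl.map φ)) 0 := by
      rw [map_one, map_zero]; exact h01
    obtain ⟨c, hc⟩ := (IsLocalization.eq_iff_exists (p.primeCompl.map φ) _).mp h1
    obtain ⟨tt, s0, hs0, rfl⟩ := c
    simp only [mul_one, mul_zero] at hc
    have hz : s0 = 0 := hinj (by rw [hc, map_zero])
    exact hs0 (hz ▸ p.zero_mem)
  have hintloc : (locMap φ p).IsIntegral := isIntegral_localization' hint p.primeCompl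
  obtain ⟨M, hM⟩ := Ideal.exists_maximal (Localization (p.primeCompl.map φ))
  haveI : M.IsPrime := hM.isPrime
  set q0 : Ideal (RSemi φ) :=
    (M.comap (algebraMap B (Localization (p.primeCompl.map φ)))).comap (RSemi φ).subtype
    with hq0def
  have hq0p : q0.IsPrime := by rw [hq0def]; infer_instance
  have hq0com : q0.comap ψ = p := by
    have h1 : (M.comap (locMap φ p)).IsMaximal :=
      Ideal.isMaximal_comap_of_isIntegral_of_isMaximal' (locMap φ p) hintloc M
    have h2 : M.comap (locMap φ p) = IsLocalRing.maximalIdeal (Localization.AtPrime p) :=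
      IsLocalRing.eq_maximalIdeal h1
    have hcomp : (algebraMap B (Localization (p.primeCompl.map φ))).comp ((RSemi φ).subtype.comp ψ)
        = (locMap φ p).comp (algebraMap A (Localization.AtPrime p)) := by
      rw [locMap, IsLocalization.map_comp]; rfl
    show ((M.comap (algebraMap B (Localization (p.primeCompl.map φ)))).comap
        (RSemi φ).subtype).comap ψ = p
    rw [Ideal.comap_comap, Ideal.comap_comap, hcomp, ← Ideal.comap_comap, h2]
    exact Localization.AtPrime.under_maximalIdeal
  constructor
  · refine ⟨q0, ⟨hq0p, hq0com⟩, ?_⟩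
    rintro q' ⟨hq', hc'⟩
    refine Ideal.ext fun x => ?_
    obtain ⟨a, s, j, hj, hd⟩ := RSemi_decomp φ p hreal x
    exact (key_char φ hinj hint p q' hq' hc' x a s j hj hd).trans
      (key_char φ hinj hint p q0 hq0p hq0com x a s j hj hd).symm
  · intro q hq hcom
    have hres : ∀ b : (RSemi φ), ∃ a s : A, s ∉ p ∧ ψ s * b - ψ a ∈ q := by
      intro b
      obtain ⟨a, s, j, hj, hd⟩ := RSemi_decomp φ p hreal b
      refine ⟨a, s, s.2, ?_⟩
      have hkey : algebraMap B (Localization (p.primeCompl.map φ)) (φ s) *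
          locMap φ p (IsLocalization.mk' (Localization.AtPrime p) a s) =
          algebraMap B (Localization (p.primeCompl.map φ)) (φ a) := by
        calc algebraMap B (Localization (p.primeCompl.map φ)) (φ s) *
            locMap φ p (IsLocalization.mk' (Localization.AtPrime p) a s)
            = locMap φ p (algebraMap A (Localization.AtPrime p) s) *
              locMap φ p (IsLocalization.mk' (Localization.AtPrime p) a s) := by
              rw [locMap, IsLocalization.map_eq]
          _ = locMap φ p (algebraMap A (Localization.AtPrime p) s *
              IsLocalization.mk' (Localization.AtPrime p) a s) := by rw [map_mul]
          _ = locMap φ p (algebraMap A (Localization.AtPrime p) a) := by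
              rw [IsLocalization.mk'_spec']
          _ = algebraMap B (Localization (p.primeCompl.map φ)) (φ a) := by
              rw [locMap, IsLocalization.map_eq]
      have hd2 : algebraMap B (Localization (p.primeCompl.map φ))
          ((ψ s * b - ψ a : RSemi φ) : B) =
          locMap φ p (IsLocalization.mk' (Localization.AtPrime p) 0 (1 : p.primeCompl)) +
          algebraMap B (Localization (p.primeCompl.map φ)) (φ s) * j := by
        rw [IsLocalization.mk'_zero, map_zero, zero_add]
        have hcoe : ((ψ s * b - ψ a : RSemi φ) : B) = φ s * (b : B) - φ a := rfl
        rw [hcoe, map_sub, map_mul, hd, mul_add, hkey]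
        ring
      exact (key_char φ hinj hint p q hq hcom (ψ s * b - ψ a) 0 1
        (algebraMap B _ (φ s) * j) (Ideal.mul_mem_left _ _ hj) hd2).mpr p.zero_mem
    refine ⟨?_, hres⟩
    intro n c hs i
    choose av sv hsv hqv using fun i => hres (c i)
    have hst : ∀ i : Fin n, sv i * ∏ j ∈ Finset.univ.erase i, sv j = ∏ j, sv j :=
      fun i => Finset.mul_prod_erase _ _ (Finset.mem_univ i)
    set t : Fin n → A := fun i => ∏ j ∈ Finset.univ.erase i, sv j with ht
    have hXY : ∀ i, ψ (av i * t i) - ψ (∏ j, sv j) * c i ∈ q := by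
      intro i
      have heq : ψ (av i * t i) - ψ (∏ j, sv j) * c i
          = ψ (t i) * -(ψ (sv i) * c i - ψ (av i)) := by
        rw [← hst i, map_mul, map_mul]; ring
      rw [heq]
      exact Ideal.mul_mem_left _ _ (q.neg_mem (hqv i))
    have hsq : (∑ i, ψ (av i * t i) ^ 2) ∈ q := by
      have h1 : (∑ i, (ψ (av i * t i) ^ 2 - (ψ (∏ j, sv j) * c i) ^ 2)) ∈ q :=
        Ideal.sum_mem _ fun i _ => by
          have hfac : ψ (av i * t i) ^ 2 - (ψ (∏ j, sv j) * c i) ^ 2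
              = (ψ (av i * t i) - ψ (∏ j, sv j) * c i) *
                (ψ (av i * t i) + ψ (∏ j, sv j) * c i) := by ring
          rw [hfac]; exact Ideal.mul_mem_right _ _ (hXY i)
      have h2 : (∑ i, (ψ (∏ j, sv j) * c i) ^ 2) ∈ q := by
        have heq2 : (∑ i, (ψ (∏ j, sv j) * c i) ^ 2) = ψ (∏ j, sv j) ^ 2 * ∑ i, c i ^ 2 := by
          rw [Finset.mul_sum]; exact Finset.sum_congr rfl fun i _ => by ring
        rw [heq2]; exact Ideal.mul_mem_left _ _ hs
      have h3 := q.add_mem h1 h2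
      rw [← Finset.sum_add_distrib] at h3
      simpa using h3
    have hp2 : (∑ i, (av i * t i) ^ 2) ∈ p := by
      rw [← hcom, Ideal.mem_comap]
      have hmap : ψ (∑ i, (av i * t i) ^ 2) = ∑ i, ψ (av i * t i) ^ 2 := by
        rw [map_sum]; exact Finset.sum_congr rfl fun i _ => by rw [map_pow]
      rw [hmap]; exact hsq
    have hati := hreal n (fun i => av i * t i) hp2 i
    have hti : t i ∉ p := fun hmem => by
      have hc : t i ∈ p.primeCompl := Submonoid.prod_mem _ fun j _ => hsv j
      exact hc hmem
    have hai : av i ∈ p := (hp.mem_or_mem hati).resolve_right hti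
    have h6 : ψ (av i) ∈ q := by rw [← hcom] at hai; exact hai
    have h5 : ψ (sv i) * c i ∈ q := by
      have h7 := q.add_mem (hqv i) h6
      simpa using h7
    rcases hq.mem_or_mem h5 with h | h
    · exfalso; apply hsv i; rw [← hcom]; exact h
    · exact h
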